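/- (Ruzsa–Szemerédi triangle removal lemma.) For every ε > 0 there exists δ > 0 such that for every graph G on n vertices containing at most δ n^3 triangles, there exists a set F of at most ε n^2 edges of G such that the graph G − F obtained by deleting the edges in F is triangle-free. -/

import Mathlib

/-- The number of triangles of `G`: the number of 3-element vertex subsets that are
pairwise adjacent in `G`. -/
noncomputable def triangleCount {V : Type*} (G : SimpleGraph V) : ℕ :=
  Nat.card {s : Finset V // G.IsNClique 3 s}

/-- Ruzsa–Szemerédi triangle removal lemma: for every `ε > 0` there is `δ > 0` such that
every graph `G` on `n` vertices with at most `δ n^3` triangles can be made triangle-free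
by removing a set `F` of at most `ε n^2` edges. -/
theorem triangle_removal_lemma :
    ∀ ε : ℝ, 0 < ε → ∃ δ : ℝ, 0 < δ ∧
      ∀ (n : ℕ) (G : SimpleGraph (Fin n)),
        (triangleCount G : ℝ) ≤ δ * (n : ℝ) ^ 3 →
        ∃ F : Set (Sym2 (Fin n)), F ⊆ G.edgeSet ∧ (Nat.card F : ℝ) ≤ ε * (n : ℝ) ^ 2 ∧
          (G.deleteEdges F).CliqueFree 3 := by
  intro ε hε
  set ε' : ℝ := min ε 1 with hε'def
  have hε'0 : 0 < ε' := lt_min hε one_pos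
  have hε'1 : ε' ≤ 1 := min_le_right _ _
  refine ⟨SimpleGraph.triangleRemovalBound ε' / 2,
    half_pos (SimpleGraph.triangleRemovalBound_pos hε'0), ?_⟩
  intro n G hG
  classical
  rcases Nat.eq_zero_or_pos n with rfl | hn
  · refine ⟨∅, by simp, by simp, ?_⟩
    exact SimpleGraph.cliqueFree_of_card_lt (by simp)
  have hcount : (triangleCount G : ℝ) = (G.cliqueFinset 3).card := by
    rw [triangleCount, Nat.card_eq_fintype_card, Fintype.card_subtype]
    rfl
  have hlt : ((G.cliqueFinset 3).card : ℝ) <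
      SimpleGraph.triangleRemovalBound ε' * (Fintype.card (Fin n)) ^ 3 := by
    rw [← hcount, Fintype.card_fin]
    refine hG.trans_lt ?_
    have hn3 : (0:ℝ) < (n:ℝ) ^ 3 := by positivity
    have := SimpleGraph.triangleRemovalBound_pos hε'0
    nlinarith
  obtain ⟨G', hle, _, hcard, hfree⟩ := SimpleGraph.triangle_removal hlt
  refine ⟨G.edgeSet \ G'.edgeSet, Set.diff_subset, ?_, ?_⟩
  · have hfin : (G.edgeSet \ G'.edgeSet) = ↑(G.edgeFinset \ G'.edgeFinset) := by
      simp [Finset.coe_sdiff, SimpleGraph.coe_edgeFinset]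
    rw [hfin, Nat.card_coe_set_eq, Set.ncard_coe_finset,
      Finset.card_sdiff_of_subset (SimpleGraph.edgeFinset_mono hle)]
    have h2 : ((G.edgeFinset.card - G'.edgeFinset.card : ℕ) : ℝ)
        = (G.edgeFinset.card : ℝ) - G'.edgeFinset.card := by
      rw [Nat.cast_sub (Finset.card_le_card (SimpleGraph.edgeFinset_mono hle))]
    rw [h2]
    refine hcard.le.trans ?_
    rw [Fintype.card_fin]
    have : ε' ≤ ε := min_le_left _ _
    push_cast
    nlinarith [sq_nonneg (n:ℝ)]
  · rwa [← SimpleGraph.edgeSet_sdiff, SimpleGraph.deleteEdges_edgeSet,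
      sdiff_sdiff_eq_self hle]
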